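/- arXiv:2306.06606 — 3 statements merged into one kernel-verified Lean document; each statement's English description precedes it below -/
import Mathlib

section
/- Let G be a group, (ℓ²(G), λ_G) its left regular representation, and r: G → ℓ²(G) a proper array (π_g r(g⁻¹) = -r(g), sup_h ‖r(gh) - λ_G(g)r(h)‖ < ∞ for each g, and {g : ‖r(g)‖ ≤ N} finite for each N). Fix n ∈ ℕ and set F = {g : ‖r(g)‖ < n}. Define r'(g) = n·(1_{g} - 1_{1}) for g ∈ F and r'(g) = r(g) otherwise. Then r' is a proper array satisfying ‖r'(g)‖ ≥ n for all g ≠ 1. -/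
open scoped Classical

/-- The `ℓ²`-norm of a function `f : G → ℝ`. -/
noncomputable def l2Norm {G : Type*} (f : G → ℝ) : ℝ :=
  Real.sqrt (∑' x : G, (f x) ^ 2)

/-- The left regular representation of `G` on functions `G → ℝ`. -/
def lamG {G : Type*} [Group G] (g : G) (f : G → ℝ) : G → ℝ :=
  fun x => f (g⁻¹ * x)

/-- The indicator function of a singleton `{g}` in `ℓ²(G)`. -/
noncomputable def ind {G : Type*} (g : G) : G → ℝ := fun x => if x = g then 1 else 0

section helpers
variable {G : Type*}

lemma norm_rpow_two_eq (x : ℝ) : ‖x‖ ^ ((2:ENNReal).toReal) = x ^ 2 := by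
  rw [ENNReal.toReal_ofNat]
  rw [show ((2:ℝ)) = ((2:ℕ):ℝ) by norm_num, Real.rpow_natCast]
  simp [Real.norm_eq_abs, sq_abs]

lemma mem2_of_summable {f : G → ℝ} (hf : Summable fun x => f x ^ 2) :
    Memℓp f 2 := by
  apply memℓp_gen
  simpa only [norm_rpow_two_eq] using hf

lemma summable_of_mem2 {f : G → ℝ} (hf : Memℓp f 2) :
    Summable fun x => f x ^ 2 := by
  have := (memℓp_gen_iff (E := fun _ : G => ℝ) (by norm_num)).1 hf
  simpa only [norm_rpow_two_eq] using this

lemma summable_sq_sub {f g : G → ℝ} (hf : Summable fun x => f x ^ 2)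
    (hg : Summable fun x => g x ^ 2) :
    Summable fun x => (f - g) x ^ 2 :=
  summable_of_mem2 ((mem2_of_summable hf).sub (mem2_of_summable hg))

lemma summable_sq_add {f g : G → ℝ} (hf : Summable fun x => f x ^ 2)
    (hg : Summable fun x => g x ^ 2) :
    Summable fun x => (f + g) x ^ 2 :=
  summable_of_mem2 ((mem2_of_summable hf).add (mem2_of_summable hg))

lemma l2Norm_eq_lp_norm (f : G → ℝ) (hf : Memℓp f 2) :
    l2Norm f = ‖(⟨f, hf⟩ : lp (fun _ : G => ℝ) 2)‖ := by
  rw [lp.norm_eq_tsum_rpow (by norm_num) ⟨f, hf⟩]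
  simp only [norm_rpow_two_eq]
  rw [l2Norm, Real.sqrt_eq_rpow]
  norm_num

lemma l2Norm_add_le {f g : G → ℝ} (hf : Summable fun x => f x ^ 2)
    (hg : Summable fun x => g x ^ 2) :
    l2Norm (f + g) ≤ l2Norm f + l2Norm g := by
  have hf2 := mem2_of_summable hf
  have hg2 := mem2_of_summable hg
  rw [l2Norm_eq_lp_norm f hf2, l2Norm_eq_lp_norm g hg2,
    l2Norm_eq_lp_norm (f + g) (hf2.add hg2)]
  exact norm_add_le (⟨f, hf2⟩ : lp (fun _ : G => ℝ) 2) ⟨g, hg2⟩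

lemma l2Norm_neg (f : G → ℝ) : l2Norm (-f) = l2Norm f := by
  simp [l2Norm, neg_sq]

lemma l2Norm_zero : l2Norm (0 : G → ℝ) = 0 := by simp [l2Norm]

variable [Group G]

lemma summable_lamG {g : G} {f : G → ℝ} (hf : Summable fun x => f x ^ 2) :
    Summable fun x => (lamG g f) x ^ 2 :=
  ((Equiv.mulLeft g⁻¹).summable_iff (f := fun y => f y ^ 2)).2 hf

lemma l2Norm_lamG (g : G) (f : G → ℝ) : l2Norm (lamG g f) = l2Norm f :=
  congrArg Real.sqrt ((Equiv.mulLeft g⁻¹).tsum_eq (fun y => f y ^ 2))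

end helpers

/-- Modifying a proper array `r : G → ℓ²(G)` on the finite set
`F = {g : ‖r g‖ < n}` by `r'(g) = n·(1_g - 1_1)` yields a proper array `r'`
with `‖r'(g)‖ ≥ n` for every `g ≠ 1`. -/
theorem modified_proper_array (G : Type*) [Group G] [Countable G]
    (r : G → G → ℝ)
    (hl2 : ∀ g : G, Summable fun x => (r g x) ^ 2)
    (hanti : ∀ g : G, lamG g (r g⁻¹) = -r g)
    (harray : ∀ g : G, ∃ C : ℝ, ∀ h : G, l2Norm (r (g * h) - lamG g (r h)) ≤ C)
    (hproper : ∀ N : ℝ, {g : G | l2Norm (r g) ≤ N}.Finite)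
    (n : ℕ)
    (r' : G → G → ℝ)
    (hr' : ∀ g : G, r' g =
      if l2Norm (r g) < n then (n : ℝ) • (ind g - ind (1 : G)) else r g) :
    (∀ g : G, lamG g (r' g⁻¹) = -r' g) ∧
    (∀ g : G, ∃ C : ℝ, ∀ h : G, l2Norm (r' (g * h) - lamG g (r' h)) ≤ C) ∧
    (∀ N : ℝ, {g : G | l2Norm (r' g) ≤ N}.Finite) ∧
    (∀ g : G, g ≠ 1 → (n : ℝ) ≤ l2Norm (r' g)) := by
  -- summability of the indicator part
  have hindS : ∀ a b : G,
      Summable fun x => ((n : ℝ) • (ind a - ind b) : G → ℝ) x ^ 2 := by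
    intro a b
    apply summable_of_ne_finset_zero (s := {a, b})
    intro x hx
    simp only [Finset.mem_insert, Finset.mem_singleton, not_or] at hx
    simp [ind, hx.1, hx.2]
  -- summability of r'
  have hS' : ∀ g : G, Summable fun x => r' g x ^ 2 := by
    intro g; rw [hr' g]; split_ifs with h
    · exact hindS g 1
    · exact hl2 g
  -- F is finite
  have hFfin : {g : G | l2Norm (r g) < (n : ℝ)}.Finite :=
    (hproper n).subset fun g hg => le_of_lt (Set.mem_setOf_eq ▸ hg)
  -- invariance of the norm under inversion
  have hinv : ∀ g : G, l2Norm (r g⁻¹) = l2Norm (r g) := by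
    intro g
    have := congrArg l2Norm (hanti g)
    rwa [l2Norm_lamG, l2Norm_neg] at this
  refine ⟨?_, ?_, ?_, ?_⟩
  · -- antisymmetry
    intro g
    rw [hr' g, hr' g⁻¹, hinv g]
    split_ifs with h
    · funext x
      simp only [lamG, Pi.smul_apply, Pi.sub_apply, Pi.neg_apply, ind, smul_eq_mul]
      have e1 : (g⁻¹ * x = g⁻¹) = (x = 1) := propext mul_eq_left
      have e2 : (g⁻¹ * x = 1) = (x = g) := by
        rw [inv_mul_eq_one]; exact propext ⟨Eq.symm, Eq.symm⟩
      rw [e1, e2]; ring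
    · exact hanti g
  · -- array condition
    -- uniform bound on the perturbation
    obtain ⟨M, hM⟩ := (hFfin.image fun k => l2Norm (r' k - r k)).bddAbove
    have hM' : ∀ k : G, l2Norm (r' k - r k) ≤ max M 0 := by
      intro k
      by_cases hk : l2Norm (r k) < (n : ℝ)
      · exact le_max_of_le_left (hM (Set.mem_image_of_mem _ hk))
      · have hz : r' k - r k = 0 := by rw [hr' k, if_neg hk]; simp
        rw [hz, l2Norm_zero]
        exact le_max_right _ _
    intro g
    obtain ⟨C, hC⟩ := harray g
    refine ⟨C + max M 0 + max M 0, fun h => ?_⟩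
    have s1 : Summable fun x => (r (g * h) - lamG g (r h)) x ^ 2 :=
      summable_sq_sub (hl2 (g * h)) (summable_lamG (hl2 h))
    have s2 : Summable fun x => (r' (g * h) - r (g * h)) x ^ 2 :=
      summable_sq_sub (hS' (g * h)) (hl2 (g * h))
    have s3 : Summable fun x => (lamG g (r' h - r h)) x ^ 2 :=
      summable_lamG (summable_sq_sub (hS' h) (hl2 h))
    have s3' : Summable fun x => (-(lamG g (r' h - r h))) x ^ 2 := by
      simpa [neg_sq] using s3
    have key : r' (g * h) - lamG g (r' h) =
        ((r (g * h) - lamG g (r h)) + (r' (g * h) - r (g * h)))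
          + (-(lamG g (r' h - r h))) := by
      funext x
      simp only [Pi.sub_apply, Pi.add_apply, Pi.neg_apply, lamG]
      ring
    rw [key]
    have t1 := l2Norm_add_le (summable_sq_add s1 s2) s3'
    have t2 := l2Norm_add_le s1 s2
    have t3 : l2Norm (-(lamG g (r' h - r h))) ≤ max M 0 := by
      rw [l2Norm_neg, l2Norm_lamG]
      exact hM' h
    have t4 := hC h
    have t5 := hM' (g * h)
    linarith
  · -- properness
    intro N
    apply (hFfin.union (hproper N)).subset
    intro g hg
    by_cases hgF : l2Norm (r g) < (n : ℝ)
    · exact Or.inl hgF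
    · right
      have hrg : r' g = r g := by rw [hr' g, if_neg hgF]
      rwa [Set.mem_setOf_eq, hrg] at hg
  · -- lower bound
    intro g hg
    rw [hr' g]
    split_ifs with h
    · have hsum := hindS g 1
      have hterm : ((n : ℝ)) ^ 2 ≤ ∑' x : G, ((n : ℝ) • (ind g - ind (1 : G)) : G → ℝ) x ^ 2 := by
        have hle := Summable.le_tsum hsum g (fun j _ => sq_nonneg _)
        have hval : (((n : ℝ) • (ind g - ind (1 : G)) : G → ℝ) g) ^ 2 = ((n : ℝ)) ^ 2 := by
          simp [ind, hg]
        rw [hval] at hle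
        exact hle
      have hs := Real.sqrt_le_sqrt hterm
      rwa [Real.sqrt_sq (by positivity)] at hs
    · exact not_lt.mp h
end

section
/- Let Λ be a graph whose vertex set is a countable set X, in which every vertex has degree at most N. Let {Λᵢ}_{i∈I} be the connected components of Λ, and for a symmetric set of relations R over alphabet X in which any two letters occurring in a common relation are adjacent in Λ, define Rᵢ = {r ∈ R : some letter of r lies in V(Λᵢ)}. Then R = ⊔_{i∈I} Rᵢ is a disjoint union, and the group ⟨X | R⟩ is isomorphic to the free product ∗_{i∈I} ⟨V(Λᵢ) | Rᵢ⟩. -/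
open scoped Classical

/-- The letter `x` occurs in the reduced word of `r ∈ F(X)`. -/
noncomputable def occursIn {X : Type*} (x : X) (r : FreeGroup X) : Prop :=
  x ∈ (FreeGroup.toWord r).map Prod.fst

/-- The co-occurrence graph of a set of relations `R`: vertices are letters, and two
distinct letters are adjacent iff they occur in a common relation. -/
noncomputable def coGraph {X : Type*} (R : Set (FreeGroup X)) : SimpleGraph X where
  Adj x y := x ≠ y ∧ ∃ r ∈ R, occursIn x r ∧ occursIn y r
  symm := by
    constructor
    rintro x y ⟨hxy, r, hr, hx, hy⟩
    exact ⟨hxy.symm, r, hr, hy, hx⟩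
  loopless := by constructor; rintro x ⟨hx, -⟩; exact hx rfl

/-- The relations supported on the connected component `i` of the co-occurrence graph,
viewed in the free group on the vertices of that component. -/
noncomputable def compRels {X : Type*} (R : Set (FreeGroup X))
    (i : (coGraph R).ConnectedComponent) :
    Set (FreeGroup {x : X // (coGraph R).connectedComponentMk x = i}) :=
  {w | FreeGroup.map (Subtype.val) w ∈ R}

section Aux

variable {X : Type*} {R : Set (FreeGroup X)}

/-- Any two letters occurring in a common relation lie in the same component. -/
lemma occurs_comp_eq {r : FreeGroup X} (hr : r ∈ R) {x y : X}
    (hx : occursIn x r) (hy : occursIn y r) :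
    (coGraph R).connectedComponentMk x = (coGraph R).connectedComponentMk y := by
  by_cases h : x = y
  · rw [h]
  · exact SimpleGraph.ConnectedComponent.sound (SimpleGraph.Adj.reachable ⟨h, r, hr, hx, hy⟩)

/-- Every nontrivial relation lifts to the free group on one component. -/
lemma mem_image_compRels {r : FreeGroup X} (hr : r ∈ R) (hne : r ≠ 1) :
    ∃ i, r ∈ (FreeGroup.map (Subtype.val)) '' (compRels R i) := by
  have hL : r.toWord ≠ [] := fun h => hne (FreeGroup.toWord_eq_nil_iff.1 h)
  set L := r.toWord with hLdef
  set x0 : X × Bool := L.head hL with hx0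
  have hx0mem : x0 ∈ L := List.head_mem hL
  set i := (coGraph R).connectedComponentMk x0.1 with hi
  have hocc : ∀ a ∈ L, occursIn a.1 r := fun a ha =>
    List.mem_map_of_mem (f := Prod.fst) ha
  refine ⟨i, FreeGroup.mk (L.attach.map fun a =>
      (⟨a.1.1, occurs_comp_eq hr (hocc a.1 a.2) (hocc x0 hx0mem)⟩, a.1.2)), ?_, ?_⟩
  · show FreeGroup.map _ _ ∈ R
    rw [FreeGroup.map.mk, List.map_map]
    have : ((fun x : {x : X // (coGraph R).connectedComponentMk x = i} × Bool =>
        ((x.1 : X), x.2)) ∘ fun a : {a // a ∈ L} =>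
          ((⟨a.1.1, occurs_comp_eq hr (hocc a.1 a.2) (hocc x0 hx0mem)⟩ :
            {x : X // (coGraph R).connectedComponentMk x = i}), a.1.2)) =
        fun a : {a // a ∈ L} => a.1 := by
      funext a; rfl
    rw [this, List.attach_map_subtype_val, hLdef, FreeGroup.mk_toWord]
    exact hr
  · rw [FreeGroup.map.mk, List.map_map]
    have : ((fun x : {x : X // (coGraph R).connectedComponentMk x = i} × Bool =>
        ((x.1 : X), x.2)) ∘ fun a : {a // a ∈ L} =>
          ((⟨a.1.1, occurs_comp_eq hr (hocc a.1 a.2) (hocc x0 hx0mem)⟩ :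
            {x : X // (coGraph R).connectedComponentMk x = i}), a.1.2)) =
        fun a : {a // a ∈ L} => a.1 := by
      funext a; rfl
    rw [this, List.attach_map_subtype_val, hLdef, FreeGroup.mk_toWord]

/-- Letters occurring in the image of a word on component `i` lie in component `i`. -/
lemma occurs_map_comp {i : (coGraph R).ConnectedComponent}
    {w : FreeGroup {x : X // (coGraph R).connectedComponentMk x = i}} {x : X}
    (hx : occursIn x (FreeGroup.map (Subtype.val) w)) :
    (coGraph R).connectedComponentMk x = i := by
  set M := (FreeGroup.toWord w).map
      (fun p : {x : X // (coGraph R).connectedComponentMk x = i} × Bool =>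
        ((p.1 : X), p.2)) with hM
  have h1 : FreeGroup.map (Subtype.val) w = FreeGroup.mk M := by
    rw [hM, ← FreeGroup.map.mk, FreeGroup.mk_toWord]
  have h2 : List.Sublist (FreeGroup.map (Subtype.val) w).toWord M := by
    rw [h1]
    exact (FreeGroup.reduce.red (L := M)).sublist
  have hx' : x ∈ M.map Prod.fst := (h2.map Prod.fst).subset hx
  rw [hM, List.map_map] at hx'
  obtain ⟨p, _, hp⟩ := List.mem_map.1 hx'
  rw [← hp]
  exact p.1.2

end Aux

/-- A group presentation splits as the free product of the presentations supported on
the connected components of its co-occurrence graph: the relation set is the disjoint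
union of the `compRels`, and `⟨X ∣ R⟩` is isomorphic to the free product
`∗ᵢ ⟨V(Λᵢ) ∣ Rᵢ⟩`. -/
theorem presentation_free_product_of_components
    (X : Type*) [Countable X] (R : Set (FreeGroup X)) (hone : (1 : FreeGroup X) ∉ R)
    (N : ℕ) (hdeg : ∀ x : X, {y : X | (coGraph R).Adj x y}.ncard ≤ N) :
    (R = ⋃ i : (coGraph R).ConnectedComponent,
        (FreeGroup.map (Subtype.val)) '' (compRels R i)) ∧
    (Pairwise fun i j : (coGraph R).ConnectedComponent =>
        Disjoint ((FreeGroup.map (Subtype.val)) '' (compRels R i))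
          ((FreeGroup.map (Subtype.val)) '' (compRels R j))) ∧
    Nonempty (PresentedGroup R ≃*
      Monoid.CoprodI fun i : (coGraph R).ConnectedComponent =>
        PresentedGroup (compRels R i)) := by
  have hunion : R = ⋃ i : (coGraph R).ConnectedComponent,
      (FreeGroup.map (Subtype.val)) '' (compRels R i) := by
    apply Set.Subset.antisymm
    · intro r hr
      obtain ⟨i, hi⟩ := mem_image_compRels hr (fun h => hone (h ▸ hr))
      exact Set.mem_iUnion.2 ⟨i, hi⟩
    · rintro r hr
      obtain ⟨i, w, hw, rfl⟩ := Set.mem_iUnion.1 hr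
      exact hw
  have hdisj : Pairwise fun i j : (coGraph R).ConnectedComponent =>
      Disjoint ((FreeGroup.map (Subtype.val)) '' (compRels R i))
        ((FreeGroup.map (Subtype.val)) '' (compRels R j)) := by
    intro i j hij
    rw [Set.disjoint_left]
    rintro r ⟨w, hw, rfl⟩ ⟨v, hv, hvr⟩
    have hrR : FreeGroup.map (Subtype.val) w ∈ R := hw
    have hne : FreeGroup.map (Subtype.val) w ≠ 1 := fun h => hone (h ▸ hrR)
    have hL : (FreeGroup.map (Subtype.val) w).toWord ≠ [] :=
      fun h => hne (FreeGroup.toWord_eq_nil_iff.1 h)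
    set x0 := ((FreeGroup.map (Subtype.val) w).toWord.head hL) with hx0
    have hocc : occursIn x0.1 (FreeGroup.map (Subtype.val) w) :=
      List.mem_map_of_mem (f := Prod.fst) (List.head_mem hL)
    have h1 : (coGraph R).connectedComponentMk x0.1 = i := occurs_map_comp hocc
    have h2 : (coGraph R).connectedComponentMk x0.1 = j := by
      rw [← hvr] at hocc
      exact occurs_map_comp hocc
    exact hij (h1 ▸ h2)
  refine ⟨hunion, hdisj, ?_⟩
  -- the forward map
  set T := Monoid.CoprodI fun i : (coGraph R).ConnectedComponent =>
      PresentedGroup (compRels R i) with hT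
  set f : X → T := fun x =>
    Monoid.CoprodI.of (i := (coGraph R).connectedComponentMk x)
      (PresentedGroup.of ⟨x, rfl⟩) with hf
  have f_eq : ∀ (x : X) (i : (coGraph R).ConnectedComponent)
      (h : (coGraph R).connectedComponentMk x = i),
      f x = Monoid.CoprodI.of (i := i) (PresentedGroup.of ⟨x, h⟩) := by
    intro x i h
    subst h; rfl
  have hfrel : ∀ r ∈ R, FreeGroup.lift f r = 1 := by
    intro r hr
    obtain ⟨i, w, hw, rfl⟩ := mem_image_compRels hr (fun h => hone (h ▸ hr))
    have key : (FreeGroup.lift f).comp (FreeGroup.map (Subtype.val)) =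
        ((Monoid.CoprodI.of (M := fun i => PresentedGroup (compRels R i))).comp
          (PresentedGroup.mk (compRels R i))) := by
      apply FreeGroup.ext_hom
      intro a
      simp only [MonoidHom.comp_apply, FreeGroup.map.of, FreeGroup.lift_apply_of]
      have := f_eq a.1 i a.2
      rw [this]
      rfl
    have := congrArg (fun φ => φ w) key
    simp only [MonoidHom.comp_apply] at this
    rw [this]
    have hw1 : PresentedGroup.mk (compRels R i) w = 1 :=
      (QuotientGroup.eq_one_iff w).2 (Subgroup.subset_normalClosure hw)
    rw [hw1, map_one]
  set φ : PresentedGroup R →* T := PresentedGroup.toGroup hfrel with hφ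
  -- the backward map
  have hgrel : ∀ i : (coGraph R).ConnectedComponent,
      ∀ w ∈ compRels R i, FreeGroup.lift
        (fun a : {x : X // (coGraph R).connectedComponentMk x = i} =>
          (PresentedGroup.of a.1 : PresentedGroup R)) w = 1 := by
    intro i w hw
    have key : FreeGroup.lift
        (fun a : {x : X // (coGraph R).connectedComponentMk x = i} =>
          (PresentedGroup.of a.1 : PresentedGroup R)) =
        (PresentedGroup.mk R).comp (FreeGroup.map (Subtype.val)) := by
      apply FreeGroup.ext_hom
      intro a
      simp only [MonoidHom.comp_apply, FreeGroup.map.of, FreeGroup.lift_apply_of]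
      rfl
    rw [key, MonoidHom.comp_apply]
    exact (QuotientGroup.eq_one_iff _).2 (Subgroup.subset_normalClosure hw)
  set ψ : T →* PresentedGroup R :=
    Monoid.CoprodI.lift (fun i => PresentedGroup.toGroup (hgrel i)) with hψ
  refine ⟨MonoidHom.toMulEquiv φ ψ ?_ ?_⟩
  · -- ψ ∘ φ = id
    apply PresentedGroup.ext
    intro x
    simp only [MonoidHom.comp_apply, MonoidHom.id_apply, hφ]
    rw [PresentedGroup.toGroup.of]
    rw [f_eq x _ rfl, hψ, Monoid.CoprodI.lift_of, PresentedGroup.toGroup.of]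
  · -- φ ∘ ψ = id
    apply Monoid.CoprodI.ext_hom
    intro i
    apply PresentedGroup.ext
    intro a
    obtain ⟨x, hx⟩ := a
    subst hx
    simp only [MonoidHom.comp_apply, MonoidHom.id_apply, hψ]
    rw [Monoid.CoprodI.lift_of, PresentedGroup.toGroup.of, hφ, PresentedGroup.toGroup.of]
end

section
/- Suppose (Gₙ)_{n∈ℕ} are countable groups, and for each n there is a map rₙ: Gₙ → ℓ²(Gₙ) with ‖rₙ(g)‖ ≥ n for all g ∈ Gₙ \ {1} and with {g ∈ Gₙ : ‖rₙ(g)‖ ≤ N} finite for each N. Let G = ∗_{n∈ℕ} Gₙ and for g ∈ G \ {1} with normal form g = h₁⋯h_m (hᵢ ∈ G_{nᵢ} \ {1}, nᵢ ≠ n_{i+1}), define R(g) ∈ ℓ²(G) ⊗ ℓ²(ℕ) by R(g) = ∑_{i=1}^{m} λ_G(h₀⋯h_{i-1}) rₙᵢ(hᵢ) ⊗ e_{nᵢ} (with h₀ = 1, rₙᵢ viewed in ℓ²(G)), and R(1) = 0. Then ‖R(g)‖² = ∑_{i=1}^{m} ‖r_{nᵢ}(hᵢ)‖², and the map R is proper: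 for every N, the set {g ∈ G : ‖R(g)‖ ≤ N} is finite. -/
open scoped Classical

/-- The embedding of `ℓ²(Gₙ)` into functions on the free product `∗ₙ Gₙ`, induced by
the inclusion `Gₙ ↪ ∗ₙ Gₙ`. -/
noncomputable def embFn {G : ℕ → Type*} [∀ n, Group (G n)] (n : ℕ)
    (f : G n → ℝ) : Monoid.CoprodI G → ℝ :=
  fun x => if h : ∃ y : G n, Monoid.CoprodI.of y = x then f h.choose else 0

section Aux

open Monoid.CoprodI

variable {G : ℕ → Type*} [∀ n, Group (G n)]

lemma embFn_of (n : ℕ) (f : G n → ℝ) (x : G n) :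
    embFn n f (Monoid.CoprodI.of x) = f x := by
  have h : ∃ y : G n, (Monoid.CoprodI.of y : Monoid.CoprodI G) = Monoid.CoprodI.of x := ⟨x, rfl⟩
  rw [embFn, dif_pos h]
  exact congrArg f (Monoid.CoprodI.of_injective n h.choose_spec)

lemma embFn_ne_zero {n : ℕ} {f : G n → ℝ} {v : Monoid.CoprodI G}
    (h : embFn n f v ≠ 0) : ∃ y : G n, Monoid.CoprodI.of y = v := by
  by_contra hc
  rw [embFn, dif_neg hc] at h
  exact h rfl

/-- product of a list of letters -/
noncomputable def prodOf (l : List (Σ n, G n)) : Monoid.CoprodI G :=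
  (l.map fun s => Monoid.CoprodI.of s.2).prod

lemma prodOf_inj {l₁ l₂ : List (Σ n, G n)}
    (h₁ : ∀ s ∈ l₁, s.2 ≠ 1) (c₁ : l₁.Chain' fun a b => a.1 ≠ b.1)
    (h₂ : ∀ s ∈ l₂, s.2 ≠ 1) (c₂ : l₂.Chain' fun a b => a.1 ≠ b.1)
    (he : prodOf l₁ = prodOf l₂) : l₁ = l₂ := by
  have hinj : Function.Injective (Word.prod : Word G → Monoid.CoprodI G) := by
    intro a b hab
    exact Word.equiv.symm.injective hab
  have : (⟨l₁, h₁, c₁⟩ : Word G) = ⟨l₂, h₂, c₂⟩ := hinj he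
  exact congrArg Word.toList this

lemma coset_disjoint
    (m : ℕ) (n : Fin m → ℕ)
    (hch : ∀ (i : Fin m) (hi : (i : ℕ) + 1 < m), n i ≠ n ⟨(i : ℕ) + 1, hi⟩)
    (h : ∀ i : Fin m, G (n i)) (h1 : ∀ i, h i ≠ 1)
    (i j : Fin m) (hij : (i : ℕ) < (j : ℕ)) (hn : n i = n j)
    (x : G (n i)) (y : G (n j)) :
    prodOf ((List.ofFn fun k : Fin m => (⟨n k, h k⟩ : Σ n, G n)).take i) * Monoid.CoprodI.of x ≠
    prodOf ((List.ofFn fun k : Fin m => (⟨n k, h k⟩ : Σ n, G n)).take j) * Monoid.CoprodI.of y := by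
  intro heq
  set L : List (Σ n, G n) := List.ofFn fun k : Fin m => (⟨n k, h k⟩ : Σ n, G n) with hL
  have hLlen : L.length = m := by simp [hL]
  have hLget : ∀ (k : ℕ) (hk : k < L.length), L[k] = ⟨n ⟨k, hLlen ▸ hk⟩, h ⟨k, hLlen ▸ hk⟩⟩ := by
    intro k hk
    simp [hL]
  -- j ≥ i + 2
  have hjlt := j.isLt
  have hij2 : (i : ℕ) + 1 < (j : ℕ) := by
    rcases lt_or_eq_of_le (Nat.succ_le_of_lt hij) with h' | h'
    · exact h'
    · exfalso
      have hj : j = ⟨(i : ℕ) + 1, by omega⟩ := by apply Fin.ext; simp only [Fin.val_mk]; omega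
      exact hch i (by omega) (hn.trans (congrArg n hj))
  have hjm : (j : ℕ) ≤ m := le_of_lt j.isLt
  have htakelen : (L.take j).length = (j : ℕ) := by
    rw [List.length_take]; omega
  -- split take j = take i ++ mid
  have hsplit : L.take (j : ℕ) = L.take (i : ℕ) ++ (L.take (j : ℕ)).drop (i : ℕ) := by
    conv_lhs => rw [← List.take_append_drop (i : ℕ) (L.take (j : ℕ))]
    rw [List.take_take, min_eq_left (by omega)]
  set mid := (L.take (j : ℕ)).drop (i : ℕ) with hmid
  -- mid = L[i] :: mid2
  have hiltlen : (i : ℕ) < (L.take (j : ℕ)).length := by omega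
  have hdropcons : mid = (L.take (j : ℕ))[(i : ℕ)] :: (L.take (j : ℕ)).drop ((i : ℕ) + 1) := by
    rw [hmid, List.drop_eq_getElem_cons hiltlen]
  set mid2 := (L.take (j : ℕ)).drop ((i : ℕ) + 1) with hmid2
  have hmid2len : mid2.length = (j : ℕ) - ((i : ℕ) + 1) := by
    rw [hmid2, List.length_drop]; omega
  have hmid2get : ∀ (k : ℕ) (hk : k < mid2.length),
      mid2[k] = ⟨n ⟨(i:ℕ)+1+k, by omega⟩, h ⟨(i:ℕ)+1+k, by omega⟩⟩ := by
    intro k hk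
    have hk' : (i:ℕ)+1+k < (L.take (j:ℕ)).length := by omega
    have h3 : mid2[k] = (L.take (j:ℕ))[(i:ℕ)+1+k]'(by omega) := List.getElem_drop ..
    rw [h3, List.getElem_take]
    exact hLget _ _
  have hgetI : (L.take (j : ℕ))[(i : ℕ)] = ⟨n i, h i⟩ := by
    rw [List.getElem_take]
    exact hLget (i : ℕ) (by omega)
  -- the equation: of x = of (h i) * prodOf mid2 * of y
  have heq2 : prodOf (L.take (i:ℕ)) * Monoid.CoprodI.of x
      = prodOf (L.take (i:ℕ)) * (Monoid.CoprodI.of (h i) * (prodOf mid2 * Monoid.CoprodI.of y)) := by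
    rw [heq]
    conv_lhs => rw [hsplit]
    rw [show prodOf (L.take (i:ℕ) ++ mid) = prodOf (L.take (i:ℕ)) * prodOf mid by simp [prodOf]]
    rw [hdropcons, hgetI]
    rw [show prodOf (((⟨n i, h i⟩ : Σ n, G n)) :: mid2) = Monoid.CoprodI.of (h i) * prodOf mid2 by simp [prodOf]]
    group
  have heq3 : (Monoid.CoprodI.of ((h i)⁻¹ * x) : Monoid.CoprodI G) = prodOf mid2 * Monoid.CoprodI.of y := by
    have := mul_left_cancel heq2
    rw [map_mul, map_inv, this]
    group
  set z : G (n i) := (h i)⁻¹ * x with hz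
  set A' : List (Σ n, G n) := if z = 1 then [] else [⟨n i, z⟩] with hA'
  set B' : List (Σ n, G n) := mid2 ++ (if y = 1 then [] else [⟨n j, y⟩]) with hB'
  have hprodA : prodOf A' = Monoid.CoprodI.of z := by
    by_cases hz1 : z = 1
    · simp [hA', hz1, prodOf]
    · simp [hA', hz1, prodOf]
  have hprodB : prodOf B' = prodOf mid2 * Monoid.CoprodI.of y := by
    by_cases hy1 : y = 1
    · simp [hB', hy1, prodOf]
    · simp [hB', hy1, prodOf]
  -- reducedness of L
  have hLchain : L.Chain' (fun a b => a.1 ≠ b.1) := by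
    show List.IsChain _ _
    rw [List.isChain_iff_getElem]
    intro k hk
    have hk1 : k + 1 < L.length := by omega
    have hk0 : k < L.length := by omega
    rw [hLget k hk0, hLget (k+1) hk1]
    exact hch ⟨k, by omega⟩ (by simp only [Fin.val_mk]; omega)
  have hmid2ne1 : ∀ s ∈ mid2, s.2 ≠ 1 := by
    intro s hs
    have hsL : s ∈ L := List.mem_of_mem_take (List.mem_of_mem_drop hs)
    rw [hL, List.mem_ofFn] at hsL
    obtain ⟨k, rfl⟩ := hsL
    exact h1 k
  have hmid2chain : mid2.Chain' (fun a b => a.1 ≠ b.1) :=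
    hLchain.infix (((List.drop_suffix ((i:ℕ)+1) (L.take (j:ℕ))).isInfix).trans
      (List.take_prefix (j:ℕ) L).isInfix)
  have hmid2nnil : mid2 ≠ [] := by
    intro hcon
    have := congrArg List.length hcon
    simp only [hmid2len, List.length_nil] at this
    omega
  have hA'ne1 : ∀ s ∈ A', s.2 ≠ 1 := by
    by_cases hz1 : z = 1
    · simp [hA', hz1]
    · simpa [hA', hz1] using hz1
  have hA'chain : A'.Chain' (fun a b => a.1 ≠ b.1) := by
    by_cases hz1 : z = 1 <;> simp [hA', hz1, List.Chain']
  have hB'ne1 : ∀ s ∈ B', s.2 ≠ 1 := by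
    intro s hs
    rw [hB', List.mem_append] at hs
    rcases hs with hs | hs
    · exact hmid2ne1 s hs
    · by_cases hy1 : y = 1
      · simp [hy1] at hs
      · simp [hy1] at hs
        subst hs
        exact hy1
  have hB'chain : B'.Chain' (fun a b => a.1 ≠ b.1) := by
    rw [hB']
    show List.IsChain _ _
    rw [List.isChain_append]
    refine ⟨hmid2chain, ?_, ?_⟩
    · by_cases hy1 : y = 1 <;> simp [hy1]
    · intro a ha b hb
      by_cases hy1 : y = 1
      · simp [hy1] at hb
      · simp [hy1] at hb
        subst hb
        -- a is the last element of mid2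
        rw [List.getLast?_eq_getElem?] at ha
        have hlen0 : mid2.length - 1 < mid2.length := by
          have := List.length_pos_iff.mpr hmid2nnil; omega
        rw [List.getElem?_eq_getElem hlen0] at ha
        have ha' : a = mid2[mid2.length - 1] := by
          simpa using ha.symm
        rw [ha', hmid2get (mid2.length - 1) hlen0]
        have hj1 : (i:ℕ)+1+(mid2.length - 1) = (j:ℕ) - 1 := by omega
        simp only [Fin.val_mk]
        have hne := hch ⟨(i:ℕ)+1+(mid2.length-1), by omega⟩ (by simp only [Fin.val_mk]; omega)
        have hfin : (⟨(i:ℕ)+1+(mid2.length-1)+1, by omega⟩ : Fin m) = j := by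
          apply Fin.ext; simp only [Fin.val_mk]; omega
        rw [hfin] at hne
        exact hn ▸ hne
  have hAB : A' = B' := by
    apply prodOf_inj hA'ne1 hA'chain hB'ne1 hB'chain
    rw [hprodA, hprodB, heq3]
  have hB'nnil : B' ≠ [] := by
    rw [hB']
    intro hcon
    exact hmid2nnil (List.append_eq_nil_iff.mp hcon).1
  have hz1 : z ≠ 1 := by
    intro hz1
    apply hB'nnil
    rw [← hAB, hA', if_pos hz1]
  have hA'eq : A' = [⟨n i, z⟩] := by rw [hA', if_neg hz1]
  -- compare heads
  have h0A : A'[0]? = some ⟨n i, z⟩ := by rw [hA'eq]; rfl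
  have hlen0' : 0 < mid2.length := List.length_pos_iff.mpr hmid2nnil
  have h0B : B'[0]? = mid2[0]? := by
    rw [hB']; exact List.getElem?_append_left hlen0'
  have hsome : some (⟨n i, z⟩ : Σ n, G n) = some (mid2[0]'hlen0') := by
    rw [← List.getElem?_eq_getElem hlen0', ← h0B, ← h0A,
      (congrArg (fun t : List (Σ n, G n) => t[0]?) hAB)]
  replace hsome := Option.some.inj hsome
  rw [hmid2get 0 hlen0'] at hsome
  have hfst := congrArg Sigma.fst hsome
  simp only [Fin.val_mk] at hfst
  have := hch i (by omega)
  apply this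
  rw [hfst]


lemma sq_sum_eq {m : ℕ} (a : Fin m → ℝ)
    (hd : ∀ i j, i ≠ j → a i ≠ 0 → a j = 0) :
    (∑ i, a i) ^ 2 = ∑ i, (a i) ^ 2 := by
  by_cases hex : ∃ j, a j ≠ 0
  · obtain ⟨j, hj⟩ := hex
    have hz : ∀ b ∈ Finset.univ, b ≠ j → a b = 0 := by
      intro b _ hb
      by_contra hb0
      exact hj (hd b j hb hb0)
    rw [Finset.sum_eq_single j hz (by simp),
      Finset.sum_eq_single j (fun b hb hbj => by rw [hz b hb hbj]; ring) (by simp)]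
  · push_neg at hex
    simp [hex]

lemma finite_lists {α : Type*} {s : Set α} (hs : s.Finite) (k : ℕ) :
    {l : List α | l.length ≤ k ∧ ∀ x ∈ l, x ∈ s}.Finite := by
  induction k with
  | zero =>
    apply Set.Finite.subset (Set.finite_singleton ([] : List α))
    rintro l ⟨hl, -⟩
    simp only [Nat.le_zero, List.length_eq_zero_iff] at hl
    simp [hl]
  | succ k ih =>
    apply Set.Finite.subset ((Set.finite_singleton ([] : List α)).union
      (Set.Finite.image2 List.cons hs ih))
    rintro l ⟨hl, hmem⟩
    cases l with
    | nil => exact Or.inl rfl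
    | cons a t =>
      refine Or.inr (Set.mem_image2.mpr ⟨a, hmem a (by simp), t,
        ⟨by simpa using hl, fun x hx => hmem x (by simp [hx])⟩, rfl⟩)

end Aux

/-- The norm identity and properness of the array `R` on a free product `G = ∗ₙ Gₙ`
built from proper arrays `rₙ` on the factors with `‖rₙ(g)‖ ≥ n` for `g ≠ 1`:
`R(h₁⋯h_m) = ∑ᵢ λ_G(h₀⋯h_{i-1}) r_{nᵢ}(hᵢ) ⊗ e_{nᵢ}` satisfies
`‖R(g)‖² = ∑ᵢ ‖r_{nᵢ}(hᵢ)‖²`, and `{g : ‖R(g)‖ ≤ N}` is finite for every `N`. -/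
theorem free_product_array_proper
    (G : ℕ → Type*) [∀ n, Group (G n)] [∀ n, Countable (G n)]
    (r : ∀ n : ℕ, G n → (G n → ℝ))
    (hl2 : ∀ n (g : G n), Summable fun x => (r n g x) ^ 2)
    (hlow : ∀ n (g : G n), g ≠ 1 → (n : ℝ) ≤ Real.sqrt (∑' x : G n, (r n g x) ^ 2))
    (hprop : ∀ n (N : ℝ),
      {g : G n | Real.sqrt (∑' x : G n, (r n g x) ^ 2) ≤ N}.Finite)
    (R : Monoid.CoprodI G → (Monoid.CoprodI G × ℕ → ℝ))
    (hR1 : R 1 = 0)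
    (hRform : ∀ (m : ℕ) (n : Fin m → ℕ)
      (_ : ∀ (i : Fin m) (h : (i : ℕ) + 1 < m), n i ≠ n ⟨(i : ℕ) + 1, h⟩)
      (h : ∀ i : Fin m, G (n i)) (_ : ∀ i, h i ≠ 1),
      R ((List.ofFn fun i : Fin m => (Monoid.CoprodI.of (h i) : Monoid.CoprodI G)).prod)
        = fun p => ∑ i : Fin m,
            if p.2 = n i then
              embFn (n i) (r (n i) (h i))
                ((((List.ofFn fun j : Fin m =>
                    (Monoid.CoprodI.of (h j) : Monoid.CoprodI G)).take (i : ℕ)).prod)⁻¹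
                  * p.1)
            else 0) :
    (∀ (m : ℕ) (n : Fin m → ℕ)
      (_ : ∀ (i : Fin m) (h : (i : ℕ) + 1 < m), n i ≠ n ⟨(i : ℕ) + 1, h⟩)
      (h : ∀ i : Fin m, G (n i)) (_ : ∀ i, h i ≠ 1),
      (∑' p : Monoid.CoprodI G × ℕ,
          (R ((List.ofFn fun i : Fin m =>
              (Monoid.CoprodI.of (h i) : Monoid.CoprodI G)).prod) p) ^ 2)
        = ∑ i : Fin m, ∑' x : G (n i), (r (n i) (h i) x) ^ 2) ∧
    (∀ N : ℝ,
      {g : Monoid.CoprodI G |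
        Real.sqrt (∑' p : Monoid.CoprodI G × ℕ, (R g p) ^ 2) ≤ N}.Finite) := by
  have key : ∀ (m : ℕ) (n : Fin m → ℕ)
      (_ : ∀ (i : Fin m) (h : (i : ℕ) + 1 < m), n i ≠ n ⟨(i : ℕ) + 1, h⟩)
      (h : ∀ i : Fin m, G (n i)) (_ : ∀ i, h i ≠ 1),
      (∑' p : Monoid.CoprodI G × ℕ,
          (R ((List.ofFn fun i : Fin m =>
              (Monoid.CoprodI.of (h i) : Monoid.CoprodI G)).prod) p) ^ 2)
        = ∑ i : Fin m, ∑' x : G (n i), (r (n i) (h i) x) ^ 2 := by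
    intro m n hch h h1
    set F : Fin m → Monoid.CoprodI G × ℕ → ℝ := fun i p =>
      if p.2 = n i then
        embFn (n i) (r (n i) (h i))
          ((((List.ofFn fun j : Fin m =>
              (Monoid.CoprodI.of (h j) : Monoid.CoprodI G)).take (i : ℕ)).prod)⁻¹ * p.1)
      else 0 with hFdef
    have hRg : R ((List.ofFn fun i : Fin m =>
        (Monoid.CoprodI.of (h i) : Monoid.CoprodI G)).prod) = fun p => ∑ i : Fin m, F i p :=
      hRform m n hch h h1
    -- identify c with prodOf
    have hmap : (List.ofFn fun k : Fin m => (Monoid.CoprodI.of (h k) : Monoid.CoprodI G))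
        = (List.ofFn fun k : Fin m => (⟨n k, h k⟩ : Σ n, G n)).map
            (fun s => Monoid.CoprodI.of s.2) := by
      rw [List.map_ofFn]; rfl
    have hcc : ∀ i : Fin m,
        ((List.ofFn fun j : Fin m =>
          (Monoid.CoprodI.of (h j) : Monoid.CoprodI G)).take (i : ℕ)).prod
        = prodOf ((List.ofFn fun k : Fin m => (⟨n k, h k⟩ : Σ n, G n)).take (i : ℕ)) := by
      intro i
      rw [hmap, ← List.map_take]
      rfl
    -- disjointness of supports
    have hdis : ∀ (p : Monoid.CoprodI G × ℕ) (i j : Fin m), i ≠ j → F i p ≠ 0 → F j p = 0 := by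
      intro p i j hij hFi
      by_contra hFj
      have hpi : p.2 = n i := by
        by_contra hc; exact hFi (by rw [hFdef]; simp only; rw [if_neg hc])
      have hpj : p.2 = n j := by
        by_contra hc; exact hFj (by rw [hFdef]; simp only; rw [if_neg hc])
      have hn : n i = n j := hpi ▸ hpj
      have hEi : embFn (n i) (r (n i) (h i))
          ((((List.ofFn fun j' : Fin m =>
            (Monoid.CoprodI.of (h j') : Monoid.CoprodI G)).take (i : ℕ)).prod)⁻¹ * p.1) ≠ 0 := by
        intro hc; exact hFi (by rw [hFdef]; simp only; rw [if_pos hpi, hc])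
      have hEj : embFn (n j) (r (n j) (h j))
          ((((List.ofFn fun j' : Fin m =>
            (Monoid.CoprodI.of (h j') : Monoid.CoprodI G)).take (j : ℕ)).prod)⁻¹ * p.1) ≠ 0 := by
        intro hc; exact hFj (by rw [hFdef]; simp only; rw [if_pos hpj, hc])
      obtain ⟨x, hx⟩ := embFn_ne_zero hEi
      obtain ⟨y, hy⟩ := embFn_ne_zero hEj
      have hxi : prodOf ((List.ofFn fun k : Fin m => (⟨n k, h k⟩ : Σ n, G n)).take (i : ℕ))
          * Monoid.CoprodI.of x = p.1 := by
        rw [← hcc i, hx]; group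
      have hyj : prodOf ((List.ofFn fun k : Fin m => (⟨n k, h k⟩ : Σ n, G n)).take (j : ℕ))
          * Monoid.CoprodI.of y = p.1 := by
        rw [← hcc j, hy]; group
      rcases lt_trichotomy (i : ℕ) (j : ℕ) with hlt | heqv | hgt
      · exact coset_disjoint m n hch h h1 i j hlt hn x y (hxi.trans hyj.symm)
      · exact hij (Fin.ext heqv)
      · exact coset_disjoint m n hch h h1 j i hgt hn.symm y x (hyj.trans hxi.symm)
    -- injection per index
    have hper : ∀ i : Fin m,
        (Summable fun p : Monoid.CoprodI G × ℕ => (F i p) ^ 2) ∧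
        (∑' p : Monoid.CoprodI G × ℕ, (F i p) ^ 2 = ∑' x : G (n i), (r (n i) (h i) x) ^ 2) := by
      intro i
      set c : Monoid.CoprodI G := ((List.ofFn fun j : Fin m =>
        (Monoid.CoprodI.of (h j) : Monoid.CoprodI G)).take (i : ℕ)).prod with hcdef
      set gm : G (n i) → Monoid.CoprodI G × ℕ := fun x => (c * Monoid.CoprodI.of x, n i) with hgm
      have hginj : Function.Injective gm := by
        intro a b hab
        rw [hgm] at hab
        have := congrArg Prod.fst hab
        simp only at this
        exact Monoid.CoprodI.of_injective (n i) (mul_left_cancel this)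
      have hcomp : ∀ x : G (n i), F i (gm x) = r (n i) (h i) x := by
        intro x
        have h0 : F i (gm x) = embFn (n i) (r (n i) (h i)) (c⁻¹ * (c * Monoid.CoprodI.of x)) :=
          if_pos rfl
        rw [h0, inv_mul_cancel_left, embFn_of]
      have hsupp : ∀ p : Monoid.CoprodI G × ℕ, p ∉ Set.range gm → F i p = 0 := by
        intro p hp
        by_contra hFp
        have hpi : p.2 = n i := by
          by_contra hc; exact hFp (by rw [hFdef]; simp only; rw [if_neg hc])
        have hE : embFn (n i) (r (n i) (h i)) (c⁻¹ * p.1) ≠ 0 := by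
          intro hc; exact hFp (by rw [hFdef]; simp only; rw [if_pos hpi]; exact hc)
        obtain ⟨x, hx⟩ := embFn_ne_zero hE
        apply hp
        refine ⟨x, ?_⟩
        show (c * Monoid.CoprodI.of x, (n i : ℕ)) = p
        rw [show c * Monoid.CoprodI.of x = p.1 by rw [hx]; group, ← hpi]
      have hsupp2 : ∀ p : Monoid.CoprodI G × ℕ, p ∉ Set.range gm → (F i p) ^ 2 = 0 := by
        intro p hp; rw [hsupp p hp]; ring
      have hsuppset : (Function.support fun p => (F i p) ^ 2) ⊆ Set.range gm := by
        intro p hp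
        by_contra hc
        exact hp (hsupp2 p hc)
      constructor
      · rw [← Function.Injective.summable_iff hginj hsupp2]
        have : ((fun p => (F i p) ^ 2) ∘ gm) = fun x => (r (n i) (h i) x) ^ 2 := by
          funext x; simp only [Function.comp_apply, hcomp x]
        rw [this]
        exact hl2 (n i) (h i)
      · rw [← Function.Injective.tsum_eq hginj hsuppset]
        apply tsum_congr
        intro x
        rw [hcomp x]
    calc (∑' p : Monoid.CoprodI G × ℕ,
          (R ((List.ofFn fun i : Fin m =>
              (Monoid.CoprodI.of (h i) : Monoid.CoprodI G)).prod) p) ^ 2)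
        = ∑' p : Monoid.CoprodI G × ℕ, (∑ i : Fin m, F i p) ^ 2 := by rw [hRg]
      _ = ∑' p : Monoid.CoprodI G × ℕ, ∑ i : Fin m, (F i p) ^ 2 := by
          apply tsum_congr
          intro p
          exact sq_sum_eq _ (fun i j hij hi => hdis p i j hij hi)
      _ = ∑ i : Fin m, ∑' p : Monoid.CoprodI G × ℕ, (F i p) ^ 2 :=
          Summable.tsum_finsetSum (fun i _ => (hper i).1)
      _ = ∑ i : Fin m, ∑' x : G (n i), (r (n i) (h i) x) ^ 2 :=
          Finset.sum_congr rfl (fun i _ => (hper i).2)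
  refine ⟨key, ?_⟩
  intro N
  by_cases hN : 0 ≤ N
  swap
  · convert Set.finite_empty
    ext g
    simp only [Set.mem_setOf_eq, Set.mem_empty_iff_false, iff_false, not_le]
    exact lt_of_lt_of_le (not_le.mp hN) (Real.sqrt_nonneg _)
  set letters : Set (Σ n, G n) :=
    ⋃ k ∈ Set.Iic (Nat.floor N),
      Sigma.mk k '' {g : G k | Real.sqrt (∑' x : G k, (r k g x) ^ 2) ≤ N} with hletters
  have hlfin : letters.Finite :=
    Set.Finite.biUnion (Set.finite_Iic _) (fun k _ => (hprop k N).image _)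
  set K0 : ℕ := Nat.floor (2 * N ^ 2 + 1) with hK0
  have hlists : {l : List (Σ n, G n) | l.length ≤ K0 ∧ ∀ x ∈ l, x ∈ letters}.Finite :=
    finite_lists hlfin K0
  have hΦinj : Function.Injective
      (fun g : Monoid.CoprodI G => (Monoid.CoprodI.Word.equiv g).toList) := by
    intro a b hab
    exact Monoid.CoprodI.Word.equiv.injective (Monoid.CoprodI.Word.ext hab)
  apply Set.Finite.of_finite_image _ (Function.Injective.injOn hΦinj)
  apply Set.Finite.subset hlists
  rintro lg ⟨g, hg, rfl⟩
  simp only [Set.mem_setOf_eq] at hg ⊢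
  set w : Monoid.CoprodI.Word G := Monoid.CoprodI.Word.equiv g with hw
  have hprodw : Monoid.CoprodI.Word.prod w = g := Monoid.CoprodI.Word.equiv.symm_apply_apply g
  have halt : ∀ (k : ℕ) (hk : k + 1 < w.toList.length),
      (w.toList.get ⟨k, by omega⟩).1 ≠ (w.toList.get ⟨k + 1, hk⟩).1 := by
    intro k hk
    exact List.isChain_iff_getElem.mp w.chain_ne k hk
  have hne1 : ∀ i : Fin w.toList.length, (w.toList.get i).2 ≠ 1 :=
    fun i => w.ne_one (w.toList.get i) (List.get_mem w.toList i)
  have happ := key w.toList.length (fun i => (w.toList.get i).1)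
    (fun i hi => halt (i : ℕ) hi) (fun i => (w.toList.get i).2) hne1
  have hofn : (List.ofFn fun i : Fin w.toList.length =>
      (Monoid.CoprodI.of ((w.toList.get i).2) : Monoid.CoprodI G))
      = w.toList.map (fun s => Monoid.CoprodI.of s.2) := by
    rw [← List.ofFn_getElem_eq_map w.toList (fun s => Monoid.CoprodI.of s.2)]
    rfl
  have hgeq : (List.ofFn fun i : Fin w.toList.length =>
      (Monoid.CoprodI.of ((w.toList.get i).2) : Monoid.CoprodI G)).prod = g := by
    rw [hofn]; exact hprodw
  rw [hgeq] at happ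
  -- nonnegativity facts
  have ht_nonneg : ∀ i : Fin w.toList.length,
      (0:ℝ) ≤ ∑' x : G ((w.toList.get i).1), (r _ ((w.toList.get i).2) x) ^ 2 :=
    fun i => tsum_nonneg (fun x => sq_nonneg _)
  have hS_nonneg : (0:ℝ) ≤ ∑' p : Monoid.CoprodI G × ℕ, (R g p) ^ 2 :=
    tsum_nonneg (fun p => sq_nonneg _)
  have hSN : (∑' p : Monoid.CoprodI G × ℕ, (R g p) ^ 2) ≤ N ^ 2 := by
    nlinarith [Real.sq_sqrt hS_nonneg, Real.sqrt_nonneg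
      (∑' p : Monoid.CoprodI G × ℕ, (R g p) ^ 2)]
  have hti_le : ∀ i : Fin w.toList.length,
      (∑' x : G ((w.toList.get i).1), (r _ ((w.toList.get i).2) x) ^ 2) ≤ N ^ 2 := by
    intro i
    calc (∑' x : G ((w.toList.get i).1), (r _ ((w.toList.get i).2) x) ^ 2)
        ≤ ∑ j : Fin w.toList.length,
            ∑' x : G ((w.toList.get j).1), (r _ ((w.toList.get j).2) x) ^ 2 :=
          Finset.single_le_sum (fun j _ => ht_nonneg j) (Finset.mem_univ i)
      _ = ∑' p : Monoid.CoprodI G × ℕ, (R g p) ^ 2 := happ.symm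
      _ ≤ N ^ 2 := hSN
  have hsqrt_ti : ∀ i : Fin w.toList.length,
      Real.sqrt (∑' x : G ((w.toList.get i).1), (r _ ((w.toList.get i).2) x) ^ 2) ≤ N := by
    intro i
    calc Real.sqrt (∑' x : G ((w.toList.get i).1), (r _ ((w.toList.get i).2) x) ^ 2)
        ≤ Real.sqrt (N ^ 2) := Real.sqrt_le_sqrt (hti_le i)
      _ = N := Real.sqrt_sq hN
  have hn_le : ∀ i : Fin w.toList.length, (((w.toList.get i).1 : ℕ) : ℝ) ≤ N :=
    fun i => le_trans (hlow _ _ (hne1 i)) (hsqrt_ti i)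
  constructor
  · -- length bound
    show w.toList.length ≤ K0
    set m := w.toList.length with hm
    set nz := Finset.univ.filter (fun i : Fin m => (w.toList.get i).1 ≠ 0) with hnz
    set z := Finset.univ.filter (fun i : Fin m => (w.toList.get i).1 = 0) with hz
    have hone : ∀ i ∈ nz,
        (1:ℝ) ≤ ∑' x : G ((w.toList.get i).1), (r _ ((w.toList.get i).2) x) ^ 2 := by
      intro i hi
      have hi0 : (w.toList.get i).1 ≠ 0 := (Finset.mem_filter.mp hi).2
      have h1 : (1:ℝ) ≤ (((w.toList.get i).1 : ℕ) : ℝ) := by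
        exact_mod_cast Nat.one_le_iff_ne_zero.mpr hi0
      have h2 := hlow _ _ (hne1 i)
      have h3 := Real.sq_sqrt (ht_nonneg i)
      nlinarith [Real.sqrt_nonneg
        (∑' x : G ((w.toList.get i).1), (r _ ((w.toList.get i).2) x) ^ 2)]
    have hnzcard : (nz.card : ℝ) ≤ N ^ 2 := by
      calc (nz.card : ℝ)
          = ∑ _i ∈ nz, (1:ℝ) := by rw [Finset.sum_const, nsmul_eq_mul, mul_one]
        _ ≤ ∑ i ∈ nz, ∑' x : G ((w.toList.get i).1), (r _ ((w.toList.get i).2) x) ^ 2 :=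
            Finset.sum_le_sum hone
        _ ≤ ∑ i : Fin m, ∑' x : G ((w.toList.get i).1), (r _ ((w.toList.get i).2) x) ^ 2 :=
            Finset.sum_le_sum_of_subset_of_nonneg (Finset.subset_univ _)
              (fun j _ _ => ht_nonneg j)
        _ = ∑' p : Monoid.CoprodI G × ℕ, (R g p) ^ 2 := happ.symm
        _ ≤ N ^ 2 := hSN
    have hcardsplit : z.card + nz.card = m := by
      rw [hz, hnz]
      rw [Finset.card_filter_add_card_filter_not]
      simp
    set z' := z.filter (fun i : Fin m => (i : ℕ) + 1 < m) with hz'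
    have hzsplit : z'.card + (z.filter (fun i : Fin m => ¬((i : ℕ) + 1 < m))).card = z.card := by
      rw [hz']
      exact Finset.card_filter_add_card_filter_not _
    have hzlast : (z.filter (fun i : Fin m => ¬((i : ℕ) + 1 < m))).card ≤ 1 := by
      apply Finset.card_le_one.mpr
      intro a ha b hb
      have ha' := (Finset.mem_filter.mp ha).2
      have hb' := (Finset.mem_filter.mp hb).2
      have := a.isLt
      have := b.isLt
      apply Fin.ext
      omega
    have hz'card : z'.card ≤ nz.card := by
      apply Finset.card_le_card_of_injOn
        (fun i : Fin m => if hi : (i : ℕ) + 1 < m then (⟨(i : ℕ) + 1, hi⟩ : Fin m) else i)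
      · intro i hi
        have hiz := Finset.mem_filter.mp hi
        have hii := Finset.mem_filter.mp hiz.1
        have hlt : (i : ℕ) + 1 < m := hiz.2
        simp only [dif_pos hlt]
        rw [hnz, Finset.mem_coe, Finset.mem_filter]
        refine ⟨Finset.mem_univ _, ?_⟩
        intro hc
        exact halt (i : ℕ) hlt (hii.2.trans hc.symm)
      · intro a ha b hb hab
        have hla : (a : ℕ) + 1 < m := (Finset.mem_filter.mp (Finset.mem_coe.mp ha)).2
        have hlb : (b : ℕ) + 1 < m := (Finset.mem_filter.mp (Finset.mem_coe.mp hb)).2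
        simp only [dif_pos hla, dif_pos hlb] at hab
        have hval := congrArg Fin.val hab
        simp only [Fin.val_mk] at hval
        exact Fin.ext (by omega)
    have hmr : (m : ℝ) ≤ 2 * N ^ 2 + 1 := by
      have : m ≤ 2 * nz.card + 1 := by omega
      have h2 : (m:ℝ) ≤ 2 * (nz.card : ℝ) + 1 := by exact_mod_cast this
      linarith
    rw [hK0]
    exact Nat.le_floor hmr
  · -- letters
    intro x hx
    obtain ⟨i, rfl⟩ := List.mem_iff_get.mp hx
    apply Set.mem_biUnion (show (w.toList.get i).1 ∈ Set.Iic (Nat.floor N) from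
      Nat.le_floor (hn_le i))
    exact ⟨(w.toList.get i).2, hsqrt_ti i, Sigma.eta _⟩
end
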